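/- Let X, Y be compact metric spaces, μ ∈ P(X), ν ∈ P(Y), c continuous on X × Y, and c̃(x,λ) = ∫_Y c dλ. For every Λ ∈ P(P(Y)) with barycenter ν, the unconstrained Kantorovich value satisfies MK(c,μ,ν) ≤ MK(c̃, μ, Λ), where MK(c̃,μ,Λ) is the Kantorovich problem between μ and Λ on X × P(Y) with cost c̃. Explicitly: for any π̃ ∈ Π(μ,Λ) with disintegration π̃ = N(x) ⊗ μ, the map f(x) = ∫_{P(Y)} λ dN(x)(λ) defines a plan f ⊗ μ ∈ Π(μ,ν) with ∫_{X×Y} c d(f⊗μ) = ∫_{X×P(Y)} c̃ dπ̃. -/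

import Mathlib

open MeasureTheory
open scoped ENNReal NNReal
open Filter Topology

noncomputable instance {α : Type*} [MeasurableSpace α] [TopologicalSpace α]
    [OpensMeasurableSpace α] : MeasurableSpace (ProbabilityMeasure α) := borel _

instance {α : Type*} [MeasurableSpace α] [TopologicalSpace α]
    [OpensMeasurableSpace α] : BorelSpace (ProbabilityMeasure α) := ⟨rfl⟩

section Aux

variable {Ω : Type*} [MeasurableSpace Ω] [TopologicalSpace Ω]
    [OpensMeasurableSpace Ω] [BorelSpace Ω] [TopologicalSpace.PseudoMetrizableSpace Ω]

lemma measurable_eval_prob {s : Set Ω} (hs : MeasurableSet s) :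
    Measurable fun l : ProbabilityMeasure Ω => (l : Measure Ω) s := by
  have hclosed : ∀ F : Set Ω, IsClosed F →
      Measurable fun l : ProbabilityMeasure Ω => (l : Measure Ω) F := by
    intro F hF
    have hcont : ∀ n : ℕ, Measurable fun l : ProbabilityMeasure Ω =>
        ∫⁻ x, (hF.apprSeq n x : ℝ≥0∞) ∂(l : Measure Ω) := by
      intro n
      have heq : (fun l : ProbabilityMeasure Ω =>
            ∫⁻ x, (hF.apprSeq n x : ℝ≥0∞) ∂(l : Measure Ω))
          = fun l : ProbabilityMeasure Ω =>
            ((l.toFiniteMeasure.testAgainstNN (hF.apprSeq n) : ℝ≥0) : ℝ≥0∞) := by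
        funext l
        rw [FiniteMeasure.testAgainstNN_coe_eq]
        rfl
      rw [heq]
      exact (ENNReal.continuous_coe.comp
        (ProbabilityMeasure.continuous_testAgainstNN_eval _)).measurable
    apply ENNReal.measurable_of_tendsto hcont
    rw [tendsto_pi_nhds]
    intro l
    exact HasOuterApproxClosed.tendsto_lintegral_apprSeq hF (l : Measure Ω)
  refine MeasurableSpace.induction_on_inter
    (C := fun s _ => Measurable fun l : ProbabilityMeasure Ω => (l : Measure Ω) s)
    (BorelSpace.measurable_eq.trans borel_eq_generateFrom_isClosed) isPiSystem_isClosed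
    ?_ ?_ ?_ ?_ s hs
  · simp only [measure_empty]
    exact measurable_const
  · exact fun t ht => hclosed t ht
  · intro t ht h
    have : (fun l : ProbabilityMeasure Ω => (l : Measure Ω) tᶜ)
        = fun l : ProbabilityMeasure Ω => 1 - (l : Measure Ω) t := by
      funext l
      rw [measure_compl ht (measure_ne_top _ _), measure_univ]
    rw [this]
    exact measurable_const.sub h
  · intro g hdisj hmeas h
    have : (fun l : ProbabilityMeasure Ω => (l : Measure Ω) (⋃ i, g i))
        = fun l : ProbabilityMeasure Ω => ∑' i, (l : Measure Ω) (g i) := by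
      funext l
      exact measure_iUnion hdisj hmeas
    rw [this]
    exact Measurable.ennreal_tsum h

lemma measurable_toMeasure :
    Measurable fun l : ProbabilityMeasure Ω => (l : Measure Ω) :=
  Measure.measurable_of_measurable_coe _ fun _s hs => measurable_eval_prob hs

end Aux

/-- A measurable family of probability measures, as a kernel. -/
noncomputable def toKernel {X Ω : Type*} [MeasurableSpace X] [MeasurableSpace Ω]
    (f : X → ProbabilityMeasure Ω) (hm : Measurable fun x => (f x : Measure Ω)) :
    ProbabilityTheory.Kernel X Ω where
  toFun x := (f x : Measure Ω)
  measurable' := hm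

@[simp] lemma toKernel_apply {X Ω : Type*} [MeasurableSpace X] [MeasurableSpace Ω]
    (f : X → ProbabilityMeasure Ω) (hm : Measurable fun x => (f x : Measure Ω)) (x : X) :
    toKernel f hm x = (f x : Measure Ω) := rfl

instance {X Ω : Type*} [MeasurableSpace X] [MeasurableSpace Ω]
    (f : X → ProbabilityMeasure Ω) (hm : Measurable fun x => (f x : Measure Ω)) :
    ProbabilityTheory.IsMarkovKernel (toKernel f hm) :=
  ⟨fun x => show IsProbabilityMeasure (f x : Measure Ω) from inferInstance⟩

/-- The plan `f(x) ⊗ μ` with disintegration fibers `f x`. -/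
noncomputable def plan {X Z : Type*} [MeasurableSpace X] [MeasurableSpace Z]
    (μ : Measure X) (f : X → ProbabilityMeasure Z) : Measure (X × Z) :=
  μ.bind fun x => ((f x : Measure Z)).map (Prod.mk x)

lemma plan_eq {X Ω : Type*} [MeasurableSpace X] [MeasurableSpace Ω]
    (μ : Measure X) [SFinite μ]
    (f : X → ProbabilityMeasure Ω) (hm : Measurable fun x => (f x : Measure Ω)) :
    plan μ f = μ.compProd (toKernel f hm) := by
  have hmeas : Measurable fun x => ((f x : Measure Ω)).map (Prod.mk x) := by
    apply Measure.measurable_of_measurable_coe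
    intro t ht
    simp_rw [Measure.map_apply measurable_prodMk_left ht]
    exact ProbabilityTheory.Kernel.measurable_kernel_prodMk_left (κ := toKernel f hm) ht
  ext s hs
  rw [plan, Measure.bind_apply hs hmeas.aemeasurable, Measure.compProd_apply hs]
  congr 1
  funext x
  rw [Measure.map_apply measurable_prodMk_left hs]
  rfl

/-- Let `X, Y` be compact metric, `c` continuous,
`c̃(x,λ) = ∫_Y c dλ`, and `Λ ∈ P(P(Y))` with barycenter `ν`.  Then
`MK(c,μ,ν) ≤ MK(c̃,μ,Λ)`.  Explicitly: for any `π̃ ∈ Π(μ,Λ)` with disintegration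
`π̃ = N(x) ⊗ μ`, the generalized barycenter map `f(x) = ∫_{P(Y)} λ dN(x)(λ)` defines a
plan `f ⊗ μ ∈ Π(μ,ν)` with `∫_{X×Y} c d(f ⊗ μ) = ∫_{X×P(Y)} c̃ dπ̃`. -/
theorem stmt11 {X Y : Type*}
    [MetricSpace X] [CompactSpace X] [MeasurableSpace X] [BorelSpace X]
    [MetricSpace Y] [CompactSpace Y] [MeasurableSpace Y] [BorelSpace Y]
    (μ : Measure X) [IsProbabilityMeasure μ]
    (ν : Measure Y) [IsProbabilityMeasure ν]
    (c : X → Y → ℝ) (hc : Continuous fun p : X × Y => c p.1 p.2)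
    (Λ : Measure (ProbabilityMeasure Y)) [IsProbabilityMeasure Λ]
    (hbar : ∀ s : Set Y, MeasurableSet s → ν s = ∫⁻ l, (l : Measure Y) s ∂Λ) :
    sInf {r : ℝ | ∃ π : Measure (X × Y),
        π.map Prod.fst = μ ∧ π.map Prod.snd = ν ∧ r = ∫ p, c p.1 p.2 ∂π} ≤
      sInf {r : ℝ | ∃ πt : Measure (X × ProbabilityMeasure Y),
        πt.map Prod.fst = μ ∧ πt.map Prod.snd = Λ ∧
        r = ∫ p, (∫ y, c p.1 y ∂(p.2 : Measure Y)) ∂πt} ∧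
    ∀ (N : X → ProbabilityMeasure (ProbabilityMeasure Y)), Measurable N →
      (plan μ N).map Prod.fst = μ → (plan μ N).map Prod.snd = Λ →
      ∀ f : X → ProbabilityMeasure Y, Measurable f →
        (∀ x, ∀ s : Set Y, MeasurableSet s →
          (f x : Measure Y) s = ∫⁻ l, (l : Measure Y) s ∂(N x : Measure (ProbabilityMeasure Y))) →
        (plan μ f).map Prod.fst = μ ∧ (plan μ f).map Prod.snd = ν ∧
          (∫ p, c p.1 p.2 ∂(plan μ f)) =
            ∫ p, (∫ y, c p.1 y ∂(p.2 : Measure Y)) ∂(plan μ N) := by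
  obtain ⟨M0, hM0⟩ := (isCompact_univ : IsCompact (Set.univ : Set (X × Y))
    ).exists_bound_of_continuousOn hc.continuousOn
  set M : ℝ := max M0 0 with hMdef
  have hM : ∀ (x : X) (y : Y), ‖c x y‖ ≤ M := fun x y =>
    le_trans (hM0 (x, y) trivial) (le_max_left _ _)
  have hMnn : (0 : ℝ) ≤ M := le_max_right _ _
  have hcm : Measurable fun p : X × Y => c p.1 p.2 := hc.measurable
  constructor
  · -- the inf inequality
    apply csInf_le_csInf
    · -- bounded below by -M
      refine ⟨-M, fun r hr => ?_⟩
      obtain ⟨π, h1, _h2, rfl⟩ := hr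
      haveI : IsProbabilityMeasure π := by
        constructor
        have h := congrArg (fun m : Measure X => m Set.univ) h1
        simpa [Measure.map_apply measurable_fst MeasurableSet.univ] using h
      have hnorm := norm_integral_le_of_norm_le_const (μ := π) (C := M)
        (Eventually.of_forall fun p : X × Y => hM p.1 p.2)
      have habs : |∫ p, c p.1 p.2 ∂π| ≤ M := by
        simpa [Real.norm_eq_abs, measure_univ] using hnorm
      linarith [(abs_le.mp habs).1]
    · -- nonempty
      refine ⟨_, ⟨μ.prod Λ, by simp, by simp, rfl⟩⟩
    · -- subset
      rintro r ⟨πt, h1, h2, rfl⟩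
      haveI : IsProbabilityMeasure πt := by
        constructor
        have h := congrArg (fun m : Measure X => m Set.univ) h1
        simpa [Measure.map_apply measurable_fst MeasurableSet.univ] using h
      set K := toKernel (fun p : X × ProbabilityMeasure Y => p.2)
        (measurable_toMeasure.comp measurable_snd) with hK
      set π := (πt.compProd K).map
        (fun q : (X × ProbabilityMeasure Y) × Y => (q.1.1, q.2)) with hπ
      have hg : Measurable fun q : (X × ProbabilityMeasure Y) × Y => (q.1.1, q.2) :=
        measurable_fst.fst.prodMk measurable_snd
      haveI : IsProbabilityMeasure (πt.compProd K) := by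
        constructor
        rw [Measure.compProd_apply_univ]
        exact measure_univ
      refine ⟨π, ?_, ?_, ?_⟩
      · rw [hπ, Measure.map_map measurable_fst hg]
        have heq : (Prod.fst ∘ fun q : (X × ProbabilityMeasure Y) × Y => (q.1.1, q.2))
            = (Prod.fst ∘ Prod.fst) := rfl
        rw [heq, ← Measure.map_map measurable_fst measurable_fst,
          show (πt.compProd K).map Prod.fst = (πt.compProd K).fst from rfl,
          Measure.fst_compProd, h1]
      · ext s hs
        rw [hπ, Measure.map_map measurable_snd hg]
        have heq : (Prod.snd ∘ fun q : (X × ProbabilityMeasure Y) × Y => (q.1.1, q.2))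
            = Prod.snd := rfl
        rw [heq, Measure.map_apply measurable_snd hs,
          Measure.compProd_apply (measurable_snd hs), hbar s hs, ← h2,
          lintegral_map (measurable_eval_prob hs) measurable_snd]
        rfl
      · have hFm : Measurable fun q : (X × ProbabilityMeasure Y) × Y => c q.1.1 q.2 :=
          hcm.comp hg
        have hFint : Integrable (fun q : (X × ProbabilityMeasure Y) × Y => c q.1.1 q.2)
            (πt.compProd K) :=
          (integrable_const M).mono' hFm.aestronglyMeasurable
            (Eventually.of_forall fun q => hM q.1.1 q.2)
        rw [hπ, integral_map hg.aemeasurable hcm.aestronglyMeasurable,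
          Measure.integral_compProd hFint]
        rfl
  · -- the explicit plan statement
    intro N hN _hNfst hNsnd f hf hfbar
    have hmN : Measurable fun x => (N x : Measure (ProbabilityMeasure Y)) :=
      measurable_toMeasure.comp hN
    have hmf : Measurable fun x => (f x : Measure Y) := measurable_toMeasure.comp hf
    have hjoin : ∀ x : X, (f x : Measure Y)
        = Measure.join ((N x : Measure (ProbabilityMeasure Y)).map
            (fun l : ProbabilityMeasure Y => (l : Measure Y))) := by
      intro x
      ext s hs
      rw [Measure.join_apply hs,
        lintegral_map (Measure.measurable_coe hs) measurable_toMeasure, hfbar x s hs]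
    have hlint : ∀ (x : X) {g : Y → ℝ≥0∞}, Measurable g →
        ∫⁻ y, g y ∂(f x : Measure Y)
          = ∫⁻ l, (∫⁻ y, g y ∂(l : Measure Y)) ∂(N x : Measure (ProbabilityMeasure Y)) := by
      intro x g hg
      rw [hjoin x, Measure.lintegral_join hg.aemeasurable,
        lintegral_map (Measure.measurable_lintegral hg) measurable_toMeasure]
    -- pointwise barycenter identity for the real integral of `c x ·`
    have hpt : ∀ x : X, ∫ y, c x y ∂(f x : Measure Y)
        = ∫ l, (∫ y, c x y ∂(l : Measure Y)) ∂(N x : Measure (ProbabilityMeasure Y)) := by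
      intro x
      have hcxm : Measurable fun y => c x y :=
        hcm.comp (measurable_const.prodMk measurable_id)
      have hintc : ∀ l : ProbabilityMeasure Y, Integrable (fun y => c x y) (l : Measure Y) :=
        fun l => (integrable_const M).mono' hcxm.aestronglyMeasurable
          (Eventually.of_forall fun y => hM x y)
      have hsm : StronglyMeasurable fun l : ProbabilityMeasure Y =>
          ∫ y, c x y ∂(l : Measure Y) := by
        have h1 : StronglyMeasurable fun q : ProbabilityMeasure Y × Y => c x q.2 :=
          (hcxm.comp measurable_snd).stronglyMeasurable
        exact h1.integral_kernel_prod_right'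
          (κ := toKernel (id : ProbabilityMeasure Y → ProbabilityMeasure Y) measurable_toMeasure)
      have hsmM : StronglyMeasurable fun l : ProbabilityMeasure Y =>
          ∫ y, (c x y + M) ∂(l : Measure Y) := by
        have h1 : StronglyMeasurable fun q : ProbabilityMeasure Y × Y => c x q.2 + M :=
          ((hcxm.comp measurable_snd).add_const M).stronglyMeasurable
        exact h1.integral_kernel_prod_right'
          (κ := toKernel (id : ProbabilityMeasure Y → ProbabilityMeasure Y) measurable_toMeasure)
      have hh : ∀ y, 0 ≤ c x y + M := by
        intro y
        have := (abs_le.mp ((Real.norm_eq_abs (c x y)) ▸ hM x y)).1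
        linarith
      have hhm : Measurable fun y => c x y + M := hcxm.add_const M
      have key : ∫ y, (c x y + M) ∂(f x : Measure Y)
          = ∫ l, (∫ y, (c x y + M) ∂(l : Measure Y))
              ∂(N x : Measure (ProbabilityMeasure Y)) := by
        rw [integral_eq_lintegral_of_nonneg_ae (Eventually.of_forall hh)
            hhm.aestronglyMeasurable,
          hlint x hhm.ennreal_ofReal,
          integral_eq_lintegral_of_nonneg_ae
            (Eventually.of_forall fun l => integral_nonneg hh) hsmM.aestronglyMeasurable]
        congr 1
        apply lintegral_congr
        intro l
        exact (ofReal_integral_eq_lintegral_ofReal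
          ((hintc l).add (integrable_const M)) (Eventually.of_forall hh)).symm
      have e1 : ∫ y, (c x y + M) ∂(f x : Measure Y)
          = (∫ y, c x y ∂(f x : Measure Y)) + M := by
        rw [integral_add (hintc (f x)) (integrable_const M)]
        simp
      have hintF : Integrable (fun l : ProbabilityMeasure Y => ∫ y, c x y ∂(l : Measure Y))
          (N x : Measure (ProbabilityMeasure Y)) := by
        refine (integrable_const M).mono' hsm.aestronglyMeasurable
          (Eventually.of_forall fun l => ?_)
        have := norm_integral_le_of_norm_le_const (μ := (l : Measure Y)) (C := M)
          (Eventually.of_forall fun y => hM x y)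
        simpa [measure_univ] using this
      have e2 : ∫ l, (∫ y, (c x y + M) ∂(l : Measure Y))
            ∂(N x : Measure (ProbabilityMeasure Y))
          = (∫ l, (∫ y, c x y ∂(l : Measure Y))
              ∂(N x : Measure (ProbabilityMeasure Y))) + M := by
        have : ∀ l : ProbabilityMeasure Y, ∫ y, (c x y + M) ∂(l : Measure Y)
            = (∫ y, c x y ∂(l : Measure Y)) + M := by
          intro l
          rw [integral_add (hintc l) (integrable_const M)]
          simp
        rw [integral_congr_ae (Eventually.of_forall this),
          integral_add hintF (integrable_const M)]
        simp
      rw [e1, e2] at key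
      linarith
    have hfst : (plan μ f).map Prod.fst = μ := by
      rw [plan_eq μ f hmf,
        show (μ.compProd (toKernel f hmf)).map Prod.fst = (μ.compProd (toKernel f hmf)).fst
          from rfl,
        Measure.fst_compProd]
    have hsnd : (plan μ f).map Prod.snd = ν := by
      ext s hs
      rw [plan_eq μ f hmf, Measure.map_apply measurable_snd hs,
        Measure.compProd_apply (measurable_snd hs)]
      have hR : ν s = ∫⁻ x, ∫⁻ l, (l : Measure Y) s
          ∂(N x : Measure (ProbabilityMeasure Y)) ∂μ := by
        rw [hbar s hs, ← hNsnd, plan_eq μ N hmN,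
          lintegral_map (measurable_eval_prob hs) measurable_snd,
          Measure.lintegral_compProd (f := fun p : X × ProbabilityMeasure Y =>
            (p.2 : Measure Y) s) ((measurable_eval_prob hs).comp measurable_snd)]
        rfl
      rw [hR]
      apply lintegral_congr
      intro x
      have hx : (toKernel f hmf) x (Prod.mk x ⁻¹' (Prod.snd ⁻¹' s)) = (f x : Measure Y) s := rfl
      rw [hx, hfbar x s hs]
    refine ⟨hfst, hsnd, ?_⟩
    rw [plan_eq μ f hmf, plan_eq μ N hmN]
    haveI h1p : IsProbabilityMeasure (μ.compProd (toKernel f hmf)) := by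
      constructor
      rw [Measure.compProd_apply_univ]
      exact measure_univ
    haveI h2p : IsProbabilityMeasure (μ.compProd (toKernel N hmN)) := by
      constructor
      rw [Measure.compProd_apply_univ]
      exact measure_univ
    have hint1 : Integrable (fun p : X × Y => c p.1 p.2) (μ.compProd (toKernel f hmf)) :=
      (integrable_const M).mono' hcm.aestronglyMeasurable
        (Eventually.of_forall fun p => hM p.1 p.2)
    have hsm2 : StronglyMeasurable fun p : X × ProbabilityMeasure Y =>
        ∫ y, c p.1 y ∂(p.2 : Measure Y) := by
      have h1 : StronglyMeasurable fun q : (X × ProbabilityMeasure Y) × Y => c q.1.1 q.2 :=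
        (hcm.comp (measurable_fst.fst.prodMk measurable_snd)).stronglyMeasurable
      exact h1.integral_kernel_prod_right'
        (κ := toKernel (fun p : X × ProbabilityMeasure Y => p.2)
          (measurable_toMeasure.comp measurable_snd))
    have hint2 : Integrable (fun p : X × ProbabilityMeasure Y =>
        ∫ y, c p.1 y ∂(p.2 : Measure Y)) (μ.compProd (toKernel N hmN)) := by
      refine (integrable_const M).mono' hsm2.aestronglyMeasurable
        (Eventually.of_forall fun p => ?_)
      have := norm_integral_le_of_norm_le_const (μ := (p.2 : Measure Y)) (C := M)
        (Eventually.of_forall fun y => hM p.1 y)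
      simpa [measure_univ] using this
    rw [Measure.integral_compProd hint1, Measure.integral_compProd hint2]
    refine integral_congr_ae (Eventually.of_forall fun x => ?_)
    exact hpt x
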